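/- Let d ≥ 1 and K ≥ 1 with K ≤ d, let ψ_1, …, ψ_K ∈ ℂᵈ be linearly independent vectors, and let E_1, …, E_K ∈ ℂ. Define the K×K matrices α and β by α_{ij} = ⟨ψ_i, ψ_j⟩ (the Gram matrix, with the inner product on ℂᵈ) and β_{ij} = E_i·⟨ψ_i, ψ_j⟩. Then α is invertible, and the matrix M = βᵀ·(αᵀ)⁻¹ has characteristic polynomial ∏_{j=1}^{K}(X − E_j); in particular, the eigenvalues of M counted with algebraic multiplicity are exactly E_1, …, E_K. -/

import Mathlib

open Matrix Polynomial in
lemma charpoly_conj_aux {K : ℕ} (A B : Matrix (Fin K) (Fin K) ℂ) (hA : IsUnit A.det) :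
    (A * B * A⁻¹).charpoly = B.charpoly := by
  have hAA : A * A⁻¹ = 1 := mul_nonsing_inv A hA
  have hmap : (A.map (C : ℂ → ℂ[X])) * (A⁻¹.map C) = 1 := by
    have := congrArg (fun M => M.map (C : ℂ → ℂ[X])) hAA
    simpa [Matrix.map_mul] using this
  have key : charmatrix (A * B * A⁻¹)
      = (A.map (C : ℂ → ℂ[X])) * charmatrix B * (A⁻¹.map C) := by
    simp only [charmatrix, RingHom.mapMatrix_apply]
    rw [Matrix.mul_sub, Matrix.sub_mul, Matrix.map_mul, Matrix.map_mul]
    congr 1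
    rw [scalar_apply,
      show (Matrix.diagonal fun _ : Fin K => (X : ℂ[X])) = (X : ℂ[X]) • (1 : Matrix _ _ _) from by
        ext i j; by_cases h : i = j <;> simp [h]]
    simp [Matrix.smul_mul, Matrix.mul_smul, hmap]
  have hdet : (A.map (C : ℂ → ℂ[X])).det * (A⁻¹.map C).det = 1 := by
    rw [← det_mul, hmap, det_one]
  rw [Matrix.charpoly, key, det_mul, det_mul, mul_comm, ← mul_assoc, mul_comm ((A⁻¹.map C).det),
    hdet, one_mul, Matrix.charpoly]

open Matrix Polynomial in
/-- Correctness of the spectral-data recovery step: for linearly independent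
`ψ_1, …, ψ_K ∈ ℂᵈ` and `E_1, …, E_K ∈ ℂ`, the Gram matrix `α` is invertible and
`M = βᵀ (αᵀ)⁻¹` (with `β_{ij} = E_i ⟨ψ_i, ψ_j⟩`) has characteristic polynomial
`∏ⱼ (X − E_j)`. -/
theorem stmt_11 (d K : ℕ) (hd : 1 ≤ d) (hK : 1 ≤ K) (hKd : K ≤ d)
    (ψ : Fin K → EuclideanSpace ℂ (Fin d)) (hψ : LinearIndependent ℂ ψ)
    (E : Fin K → ℂ)
    (α β : Matrix (Fin K) (Fin K) ℂ)
    (hα : ∀ i j, α i j = (inner ℂ (ψ i) (ψ j) : ℂ))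
    (hβ : ∀ i j, β i j = E i * (inner ℂ (ψ i) (ψ j) : ℂ)) :
    IsUnit α.det ∧ (βᵀ * (αᵀ)⁻¹).charpoly = ∏ j, (X - C (E j)) := by
  -- α is invertible
  have hdet : α.det ≠ 0 := by
    intro h0
    obtain ⟨v, hv, hv0⟩ := (Matrix.exists_mulVec_eq_zero_iff).2 h0
    set w : EuclideanSpace ℂ (Fin d) := ∑ j, v j • ψ j with hw
    have hinner : ∀ i, (inner ℂ (ψ i) w : ℂ) = 0 := by
      intro i
      have := congrFun hv0 i
      simp only [Matrix.mulVec, dotProduct, hα] at this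
      rw [hw, inner_sum]
      simpa [inner_smul_right, mul_comm] using this
    have hww : (inner ℂ w w : ℂ) = 0 := by
      rw [hw]
      rw [sum_inner]
      simp only [inner_smul_left]
      simp [hinner, ← hw]
    have hw0 : w = 0 := by
      exact inner_self_eq_zero.mp hww
    have := (Fintype.linearIndependent_iff.mp hψ) v (by rw [← hw, hw0]) 
    exact hv (funext this)
  have hunit : IsUnit α.det := isUnit_iff_ne_zero.mpr hdet
  refine ⟨hunit, ?_⟩
  -- β = diagonal E * α
  have hβα : β = Matrix.diagonal E * α := by
    ext i j
    rw [Matrix.diagonal_mul, hβ, hα]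
  have hβT : βᵀ = αᵀ * Matrix.diagonal E := by
    rw [hβα, Matrix.transpose_mul, Matrix.diagonal_transpose]
  have hunitT : IsUnit αᵀ.det := by rwa [Matrix.det_transpose]
  rw [hβT, Matrix.mul_assoc, ← Matrix.mul_assoc,
    charpoly_conj_aux αᵀ (Matrix.diagonal E) hunitT]
  -- charpoly of diagonal
  have : charmatrix (Matrix.diagonal E) = Matrix.diagonal fun i => X - C (E i) := by
    ext i j
    by_cases h : i = j
    · subst h; simp
    · rw [charmatrix_apply_ne _ _ _ h, Matrix.diagonal_apply_ne _ h, Matrix.diagonal_apply_ne _ h]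
      simp
  rw [Matrix.charpoly, this, Matrix.det_diagonal]
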